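/- Under the Doeblin and perturbation assumptions, for a bounded function \(f\), the mean squared error of the ergodic average of the perturbed chain satisfies \(E\left[\left(\mu f - \frac{1}{M}\sum_{t=0}^{M-1} f(\theta^{(t)})\right)^2\right] \le 4\|f\|_\infty^2 \left(\frac{1-(1-\alpha)^M}{M\alpha} - \frac{\epsilon(1-(1-\alpha)^M)}{M\alpha^2} + \frac{\epsilon}{\alpha}\right)^2 + 8\|f\|_\infty^2 \left(\frac{1}{M} + \frac{2}{(\alpha^*)^2}\left(\frac{(1-\alpha^*)^{M+1}-(1-\alpha^*)}{M^2} + \frac{(1-\alpha^*)-(1-\alpha^*)^2}{M}\right)\right)\), where \(\alpha^*=\alpha+2\epsilon\). -/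

import Mathlib

open MeasureTheory

noncomputable def tvDist {Θ : Type*} [MeasurableSpace Θ] (μ ν : Measure Θ) : ℝ :=
  sSup {r : ℝ | ∃ A : Set Θ, MeasurableSet A ∧ r = |(μ A).toReal - (ν A).toReal|}

noncomputable def iterBind {Θ : Type*} [MeasurableSpace Θ]
    (ν : Measure Θ) (Ps : ℕ → Θ → Measure Θ) : ℕ → Measure Θ
  | 0 => ν
  | n + 1 => (iterBind ν Ps n).bind (Ps (n + 1))

noncomputable def stepK {Θ : Type*} [MeasurableSpace Θ]
    (Ps : ℕ → Θ → Measure Θ) (j : ℕ) : ℕ → Θ → Measure Θ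
  | 0 => fun x => Measure.dirac x
  | m + 1 => fun x => (stepK Ps j m x).bind (Ps (j + m + 1))

set_option linter.unusedSectionVars false
set_option linter.unusedVariables false
set_option maxHeartbeats 3000000

section TVlemmas
variable {Θ : Type*} [MeasurableSpace Θ]

lemma tv_set_nonempty (μ ν : Measure Θ) : {r : ℝ | ∃ A : Set Θ, MeasurableSet A ∧
    r = |(μ A).toReal - (ν A).toReal|}.Nonempty :=
  ⟨0, ∅, MeasurableSet.empty, by simp⟩

lemma measureReal_le_one (μ : Measure Θ) [IsProbabilityMeasure μ] (A : Set Θ) :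
    (μ A).toReal ≤ 1 := by
  have h : μ A ≤ 1 := (measure_mono (Set.subset_univ A)).trans_eq measure_univ
  exact ENNReal.toReal_le_of_le_ofReal one_pos.le (by simpa using h)

lemma tv_bddAbove (μ ν : Measure Θ) [IsProbabilityMeasure μ] [IsProbabilityMeasure ν] :
    BddAbove {r : ℝ | ∃ A : Set Θ, MeasurableSet A ∧
    r = |(μ A).toReal - (ν A).toReal|} := by
  refine ⟨1, fun r hr => ?_⟩
  obtain ⟨A, -, rfl⟩ := hr
  rw [abs_sub_le_iff]
  constructor <;> nlinarith [measureReal_le_one μ A, measureReal_le_one ν A,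
    ENNReal.toReal_nonneg (a := μ A), ENNReal.toReal_nonneg (a := ν A)]

lemma abs_sub_le_tv (μ ν : Measure Θ) [IsProbabilityMeasure μ] [IsProbabilityMeasure ν]
    {A : Set Θ} (hA : MeasurableSet A) :
    |(μ A).toReal - (ν A).toReal| ≤ tvDist μ ν :=
  le_csSup (tv_bddAbove μ ν) ⟨A, hA, rfl⟩

lemma tv_nonneg (μ ν : Measure Θ) [IsProbabilityMeasure μ] [IsProbabilityMeasure ν] :
    0 ≤ tvDist μ ν := by
  have := abs_sub_le_tv μ ν MeasurableSet.empty
  simpa using this.trans_eq' (by simp)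

lemma tv_le_of_forall (μ ν : Measure Θ) {c : ℝ} (h : ∀ A : Set Θ, MeasurableSet A →
    |(μ A).toReal - (ν A).toReal| ≤ c) : tvDist μ ν ≤ c := by
  refine csSup_le (tv_set_nonempty μ ν) ?_
  rintro r ⟨A, hA, rfl⟩; exact h A hA

lemma tv_le_one (μ ν : Measure Θ) [IsProbabilityMeasure μ] [IsProbabilityMeasure ν] :
    tvDist μ ν ≤ 1 := by
  refine tv_le_of_forall μ ν fun A hA => ?_
  rw [abs_sub_le_iff]
  constructor <;> nlinarith [measureReal_le_one μ A, measureReal_le_one ν A,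
    ENNReal.toReal_nonneg (a := μ A), ENNReal.toReal_nonneg (a := ν A)]

lemma tv_triangle (μ ν ξ : Measure Θ) [IsProbabilityMeasure μ] [IsProbabilityMeasure ν]
    [IsProbabilityMeasure ξ] : tvDist μ ξ ≤ tvDist μ ν + tvDist ν ξ := by
  refine tv_le_of_forall μ ξ fun A hA => ?_
  calc |(μ A).toReal - (ξ A).toReal|
      ≤ |(μ A).toReal - (ν A).toReal| + |(ν A).toReal - (ξ A).toReal| := abs_sub_le _ _ _
    _ ≤ tvDist μ ν + tvDist ν ξ :=
        add_le_add (abs_sub_le_tv μ ν hA) (abs_sub_le_tv ν ξ hA)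

end TVlemmas

section IntLemmas
variable {Θ : Type*} [MeasurableSpace Θ]

lemma integrable_of_bdd {α : Type*} [MeasurableSpace α] {μ : Measure α} [IsFiniteMeasure μ]
    {g : α → ℝ} (hg : Measurable g) {C : ℝ} (hC : ∀ x, |g x| ≤ C) : Integrable g μ :=
  ⟨hg.aestronglyMeasurable, HasFiniteIntegral.of_bounded (C := C) (ae_of_all _ hC)⟩

lemma integral_osc_le {μ ν : Measure Θ} [IsProbabilityMeasure μ] [IsProbabilityMeasure ν]
    {g : Θ → ℝ} (hg : Measurable g) {a γ : ℝ} (hγ : 0 ≤ γ)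
    (hlb : ∀ x, a ≤ g x) (hub : ∀ x, g x ≤ a + γ) :
    |∫ x, g x ∂μ - ∫ x, g x ∂ν| ≤ γ * tvDist μ ν := by
  obtain ⟨s, hs, h1, h2⟩ := hahn_decomposition (μ := μ) (ν := ν)
  set h : Θ → ℝ := fun x => g x - a with hh
  have hhm : Measurable h := hg.sub measurable_const
  have hhb : ∀ x, |h x| ≤ γ := fun x => abs_le.2 ⟨by have := hlb x; simp [hh]; linarith,
    by have := hub x; simp [hh]; linarith⟩
  have hh0 : ∀ x, 0 ≤ h x := fun x => by have := hlb x; simp [hh]; linarith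
  have hint : ∀ (ρ : Measure Θ), IsProbabilityMeasure ρ → ∫ x, g x ∂ρ = ∫ x, h x ∂ρ + a := by
    intro ρ hρ
    have : Integrable g ρ := integrable_of_bdd hg (C := |a| + γ)
      (fun x => abs_le.2 ⟨by have := hlb x; have := neg_abs_le a; linarith,
        by have := hub x; have := le_abs_self a; linarith⟩)
    rw [hh]; rw [integral_sub this (integrable_const a), integral_const]; simp
  have hres1 : ν.restrict s ≤ μ.restrict s := by
    refine Measure.le_iff.2 fun t ht => ?_
    rw [Measure.restrict_apply ht, Measure.restrict_apply ht]
    exact h1 _ (ht.inter hs) Set.inter_subset_right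
  have hres2 : μ.restrict sᶜ ≤ ν.restrict sᶜ := by
    refine Measure.le_iff.2 fun t ht => ?_
    rw [Measure.restrict_apply ht, Measure.restrict_apply ht]
    exact h2 _ (ht.inter hs.compl) Set.inter_subset_right
  have key : ∀ (ρ1 ρ2 : Measure Θ), IsFiniteMeasure ρ1 → IsFiniteMeasure ρ2 → ρ2 ≤ ρ1 →
      (0 ≤ ∫ x, h x ∂ρ1 - ∫ x, h x ∂ρ2 ∧
        ∫ x, h x ∂ρ1 - ∫ x, h x ∂ρ2 ≤ γ * ((ρ1 Set.univ).toReal - (ρ2 Set.univ).toReal)) := by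
    intro ρ1 ρ2 _ _ hle
    have hd : ρ1 - ρ2 + ρ2 = ρ1 := Measure.sub_add_cancel_of_le hle
    haveI : IsFiniteMeasure (ρ1 - ρ2) :=
      ⟨lt_of_le_of_lt (Measure.sub_le (μ := ρ1) (ν := ρ2) _) (measure_lt_top _ _)⟩
    have hsplit : ∫ x, h x ∂ρ1 = ∫ x, h x ∂(ρ1 - ρ2) + ∫ x, h x ∂ρ2 := by
      conv_lhs => rw [← hd]
      exact integral_add_measure (integrable_of_bdd hhm hhb) (integrable_of_bdd hhm hhb)
    have huniv : ((ρ1 - ρ2) Set.univ).toReal = (ρ1 Set.univ).toReal - (ρ2 Set.univ).toReal := by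
      rw [Measure.sub_apply MeasurableSet.univ hle,
        ENNReal.toReal_sub_of_le (hle _) (measure_ne_top _ _)]
    constructor
    · rw [hsplit]
      have : 0 ≤ ∫ x, h x ∂(ρ1 - ρ2) := integral_nonneg hh0
      linarith
    · rw [hsplit]
      have hb : ∫ x, h x ∂(ρ1 - ρ2) ≤ γ * ((ρ1 - ρ2) Set.univ).toReal := by
        calc ∫ x, h x ∂(ρ1 - ρ2) ≤ ∫ _, γ ∂(ρ1 - ρ2) :=
              integral_mono (integrable_of_bdd hhm hhb) (integrable_const γ)
                (fun x => (le_abs_self _).trans (hhb x))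
          _ = ((ρ1 - ρ2) Set.univ).toReal * γ := by rw [integral_const]; simp; left; rfl
          _ = γ * ((ρ1 - ρ2) Set.univ).toReal := mul_comm _ _
      rw [huniv] at hb; linarith
  have hμsplit : ∫ x, h x ∂μ = ∫ x, h x ∂(μ.restrict s) + ∫ x, h x ∂(μ.restrict sᶜ) := by
    conv_lhs => rw [← Measure.restrict_add_restrict_compl (μ := μ) hs]
    exact integral_add_measure (integrable_of_bdd hhm hhb) (integrable_of_bdd hhm hhb)
  have hνsplit : ∫ x, h x ∂ν = ∫ x, h x ∂(ν.restrict s) + ∫ x, h x ∂(ν.restrict sᶜ) := by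
    conv_lhs => rw [← Measure.restrict_add_restrict_compl (μ := ν) hs]
    exact integral_add_measure (integrable_of_bdd hhm hhb) (integrable_of_bdd hhm hhb)
  obtain ⟨hA1l, hA1u⟩ := key (μ.restrict s) (ν.restrict s) inferInstance inferInstance hres1
  obtain ⟨hA2l, hA2u⟩ := key (ν.restrict sᶜ) (μ.restrict sᶜ) inferInstance inferInstance hres2
  rw [Measure.restrict_apply_univ, Measure.restrict_apply_univ] at hA1u hA2u
  have htv1 : (μ s).toReal - (ν s).toReal ≤ tvDist μ ν :=
    (le_abs_self _).trans (abs_sub_le_tv μ ν hs)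
  have htv2 : (ν sᶜ).toReal - (μ sᶜ).toReal ≤ tvDist μ ν := by
    have := abs_sub_le_tv μ ν hs.compl
    rw [abs_sub_comm] at this
    exact (le_abs_self _).trans this
  have h1' : ∫ x, h x ∂(μ.restrict s) - ∫ x, h x ∂(ν.restrict s) ≤ γ * tvDist μ ν :=
    hA1u.trans (mul_le_mul_of_nonneg_left htv1 hγ)
  have h2' : ∫ x, h x ∂(ν.restrict sᶜ) - ∫ x, h x ∂(μ.restrict sᶜ) ≤ γ * tvDist μ ν :=
    hA2u.trans (mul_le_mul_of_nonneg_left htv2 hγ)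
  rw [hint μ inferInstance, hint ν inferInstance, hμsplit, hνsplit]
  rw [abs_le]
  constructor <;> [linarith; linarith]

lemma nonempty_of_prob (μ : Measure Θ) [IsProbabilityMeasure μ] : Nonempty Θ := by
  rcases isEmpty_or_nonempty Θ with h | h
  · exfalso
    have h0 : (Set.univ : Set Θ) = ∅ := Set.univ_eq_empty_iff.2 h
    have : μ Set.univ = 0 := by rw [h0]; simp
    rw [measure_univ] at this; exact one_ne_zero this
  · exact h

lemma abs_integral_sub_le_tv {μ ν : Measure Θ} [IsProbabilityMeasure μ] [IsProbabilityMeasure ν]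
    {f : Θ → ℝ} (hf : Measurable f) {C : ℝ} (hC : ∀ x, |f x| ≤ C) :
    |∫ x, f x ∂μ - ∫ x, f x ∂ν| ≤ 2 * C * tvDist μ ν := by
  have hC0 : 0 ≤ C := by
    obtain ⟨x⟩ := nonempty_of_prob μ
    exact (abs_nonneg _).trans (hC x)
  have := integral_osc_le (μ := μ) (ν := ν) hf (a := -C) (γ := 2 * C) (by linarith)
    (fun x => by have := (abs_le.1 (hC x)).1; linarith)
    (fun x => by have := (abs_le.1 (hC x)).2; linarith)
  simpa using this

lemma isProbabilityMeasure_bind (μ : Measure Θ) [IsProbabilityMeasure μ]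
    (K : Θ → Measure Θ) (hK : Measurable K) (hKp : ∀ x, IsProbabilityMeasure (K x)) :
    IsProbabilityMeasure (μ.bind K) := by
  constructor
  rw [Measure.bind_apply MeasurableSet.univ hK.aemeasurable]
  simp [measure_univ]

lemma bind_apply_toReal (μ : Measure Θ) [IsProbabilityMeasure μ]
    (K : Θ → Measure Θ) (hK : Measurable K) (hKp : ∀ x, IsProbabilityMeasure (K x))
    {A : Set Θ} (hA : MeasurableSet A) :
    ((μ.bind K) A).toReal = ∫ x, (K x A).toReal ∂μ := by
  rw [Measure.bind_apply hA hK.aemeasurable]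
  exact (integral_toReal ((Measure.measurable_coe hA).comp hK).aemeasurable
    (ae_of_all _ fun x => lt_of_le_of_lt
      ((measure_mono (Set.subset_univ A)).trans_eq (measure_univ))
      ENNReal.one_lt_top)).symm

lemma tv_bind_contract {μ ν : Measure Θ} [IsProbabilityMeasure μ] [IsProbabilityMeasure ν]
    {K : Θ → Measure Θ} (hK : Measurable K) (hKp : ∀ x, IsProbabilityMeasure (K x))
    {γ : ℝ} (hγ : 0 ≤ γ) (hosc : ∀ x y, tvDist (K x) (K y) ≤ γ) :
    tvDist (μ.bind K) (ν.bind K) ≤ γ * tvDist μ ν := by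
  haveI := isProbabilityMeasure_bind μ K hK hKp
  haveI := isProbabilityMeasure_bind ν K hK hKp
  refine tv_le_of_forall _ _ fun A hA => ?_
  rw [bind_apply_toReal μ K hK hKp hA, bind_apply_toReal ν K hK hKp hA]
  set g : Θ → ℝ := fun x => (K x A).toReal with hg
  have hgm : Measurable g := ((Measure.measurable_coe hA).comp hK).ennreal_toReal
  haveI : Nonempty Θ := nonempty_of_prob μ
  have hg0 : ∀ x, 0 ≤ g x := fun x => ENNReal.toReal_nonneg
  have hbdd : BddBelow (Set.range g) := ⟨0, by rintro r ⟨x, rfl⟩; exact hg0 x⟩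
  set a : ℝ := sInf (Set.range g) with ha
  have hosc' : ∀ x y, g x - g y ≤ γ := fun x y => by
    have := (abs_le.1 ((abs_sub_le_tv (K x) (K y) hA).trans (hosc x y))).2
    simpa [hg] using this
  refine integral_osc_le hgm hγ (fun x => csInf_le hbdd ⟨x, rfl⟩) (fun x => ?_)
  have h2 : g x - γ ≤ sInf (Set.range g) := by
    refine le_csInf (Set.range_nonempty g) ?_
    rintro r ⟨y, rfl⟩
    have := hosc' x y
    linarith
  linarith

lemma tv_bind_close {μ : Measure Θ} [IsProbabilityMeasure μ]
    {K1 K2 : Θ → Measure Θ} (hK1 : Measurable K1) (hK2 : Measurable K2)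
    (hK1p : ∀ x, IsProbabilityMeasure (K1 x)) (hK2p : ∀ x, IsProbabilityMeasure (K2 x))
    {ε : ℝ} (hε : 0 ≤ ε) (hclose : ∀ x, tvDist (K1 x) (K2 x) ≤ ε) :
    tvDist (μ.bind K1) (μ.bind K2) ≤ ε := by
  haveI := isProbabilityMeasure_bind μ K1 hK1 hK1p
  haveI := isProbabilityMeasure_bind μ K2 hK2 hK2p
  refine tv_le_of_forall _ _ fun A hA => ?_
  rw [bind_apply_toReal μ K1 hK1 hK1p hA, bind_apply_toReal μ K2 hK2 hK2p hA]
  set g1 : Θ → ℝ := fun x => (K1 x A).toReal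
  set g2 : Θ → ℝ := fun x => (K2 x A).toReal
  have hgm1 : Measurable g1 := ((Measure.measurable_coe hA).comp hK1).ennreal_toReal
  have hgm2 : Measurable g2 := ((Measure.measurable_coe hA).comp hK2).ennreal_toReal
  have hgb : ∀ (x : Θ) (K : Θ → Measure Θ) (h : ∀ y, IsProbabilityMeasure (K y)),
      (K x A).toReal ≤ 1 := fun x K h =>
    ENNReal.toReal_le_of_le_ofReal one_pos.le
      (by simpa using (measure_mono (Set.subset_univ A)).trans_eq (measure_univ))
  have hi1 : Integrable g1 μ := integrable_of_bdd hgm1 (C := 1)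
    (fun x => abs_le.2 ⟨le_trans (by norm_num) ENNReal.toReal_nonneg, hgb x K1 hK1p⟩)
  have hi2 : Integrable g2 μ := integrable_of_bdd hgm2 (C := 1)
    (fun x => abs_le.2 ⟨le_trans (by norm_num) ENNReal.toReal_nonneg, hgb x K2 hK2p⟩)
  rw [← integral_sub hi1 hi2]
  calc |∫ x, (g1 x - g2 x) ∂μ| ≤ ∫ x, |g1 x - g2 x| ∂μ := by
        simpa [Real.norm_eq_abs] using
          norm_integral_le_integral_norm (μ := μ) (f := fun x => g1 x - g2 x)
    _ ≤ ∫ _, ε ∂μ := integral_mono ((hi1.sub hi2).abs) (integrable_const ε)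
        (fun x => (abs_sub_le_tv (K1 x) (K2 x) hA).trans (hclose x))
    _ = ε := by simp

end IntLemmas

section ChainLemmas
variable {Θ : Type*} [MeasurableSpace Θ] (Ps : ℕ → Θ → Measure Θ)

lemma iterBind_prob (hmeas : ∀ t, Measurable (Ps t))
    (hprob : ∀ t x, IsProbabilityMeasure (Ps t x))
    (ν : Measure Θ) [IsProbabilityMeasure ν] :
    ∀ t, IsProbabilityMeasure (iterBind ν Ps t) := by
  intro t
  induction t with
  | zero => rwa [iterBind]
  | succ t ih =>
      rw [iterBind]
      exact isProbabilityMeasure_bind _ _ (hmeas (t+1)) (hprob (t+1))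

lemma stepK_prob (hmeas : ∀ t, Measurable (Ps t))
    (hprob : ∀ t x, IsProbabilityMeasure (Ps t x)) (j : ℕ) :
    ∀ m x, IsProbabilityMeasure (stepK Ps j m x) := by
  intro m
  induction m with
  | zero => intro x; rw [stepK]; infer_instance
  | succ m ih =>
      intro x
      haveI := ih x
      rw [stepK]
      exact isProbabilityMeasure_bind _ _ (hmeas _) (hprob _)

lemma stepK_meas (hmeas : ∀ t, Measurable (Ps t)) (j : ℕ) :
    ∀ m, Measurable (stepK Ps j m) := by
  intro m
  induction m with
  | zero => rw [stepK]; exact Measure.measurable_dirac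
  | succ m ih =>
      rw [stepK]
      exact (Measure.measurable_bind' (hmeas _)).comp ih

lemma stepK_tv (hmeas : ∀ t, Measurable (Ps t))
    (hprob : ∀ t x, IsProbabilityMeasure (Ps t x)) (j : ℕ) {β : ℝ} (hβ0 : 0 ≤ β) (hβ1 : β ≤ 1)
    (hD : ∀ t x y, tvDist (Ps t x) (Ps t y) ≤ β) :
    ∀ m x y, tvDist (stepK Ps j m x) (stepK Ps j m y) ≤ β ^ m := by
  intro m
  induction m with
  | zero =>
      intro x y
      haveI := stepK_prob Ps hmeas hprob j 0 x
      haveI := stepK_prob Ps hmeas hprob j 0 y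
      simpa using tv_le_one (stepK Ps j 0 x) (stepK Ps j 0 y)
  | succ m ih =>
      intro x y
      haveI := stepK_prob Ps hmeas hprob j m x
      haveI := stepK_prob Ps hmeas hprob j m y
      have h1 := tv_bind_contract (μ := stepK Ps j m x) (ν := stepK Ps j m y)
        (hmeas (j + m + 1)) (hprob _) hβ0 (fun a b => hD _ a b)
      have h2 := ih x y
      have h3 := tv_nonneg (stepK Ps j m x) (stepK Ps j m y)
      calc tvDist (stepK Ps j (m+1) x) (stepK Ps j (m+1) y)
          = tvDist ((stepK Ps j m x).bind (Ps (j + m + 1)))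
              ((stepK Ps j m y).bind (Ps (j + m + 1))) := by rw [stepK]
        _ ≤ β * tvDist (stepK Ps j m x) (stepK Ps j m y) := h1
        _ ≤ β * β ^ m := by nlinarith
        _ = β ^ (m+1) := by ring

lemma marginal_tv (hmeas : ∀ t, Measurable (Ps t))
    (hprob : ∀ t x, IsProbabilityMeasure (Ps t x))
    (P : Θ → Measure Θ) (hPm : Measurable P) (hPp : ∀ x, IsProbabilityMeasure (P x))
    (μ : Measure Θ) [IsProbabilityMeasure μ] (hinv : μ.bind P = μ)
    (ν : Measure Θ) [IsProbabilityMeasure ν]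
    {α ε : ℝ} (hα0 : 0 < α) (hα1 : α < 1) (hε0 : 0 ≤ ε)
    (hD : ∀ x y, tvDist (P x) (P y) ≤ 1 - α)
    (hclose : ∀ t x, tvDist (Ps t x) (P x) ≤ ε) :
    ∀ t, tvDist (iterBind ν Ps t) μ ≤ (1 - α) ^ t * (1 - ε / α) + ε / α := by
  intro t
  induction t with
  | zero =>
      haveI : IsProbabilityMeasure (iterBind ν Ps 0) := iterBind_prob Ps hmeas hprob ν 0
      have h1 := tv_le_one (iterBind ν Ps 0) μ
      have h2 : (1 - α) ^ 0 * (1 - ε / α) + ε / α = 1 := by field_simp; ring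
      rw [h2]; exact h1
  | succ t ih =>
      haveI hpt := iterBind_prob Ps hmeas hprob ν t
      haveI := isProbabilityMeasure_bind (iterBind ν Ps t) _ (hmeas (t+1)) (hprob (t+1))
      haveI := isProbabilityMeasure_bind (iterBind ν Ps t) _ hPm hPp
      haveI : IsProbabilityMeasure (μ.bind P) := isProbabilityMeasure_bind μ _ hPm hPp
      have htri : tvDist (iterBind ν Ps (t+1)) μ
          ≤ tvDist ((iterBind ν Ps t).bind (Ps (t+1))) ((iterBind ν Ps t).bind P)
            + tvDist ((iterBind ν Ps t).bind P) μ := by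
        have h := tv_triangle ((iterBind ν Ps t).bind (Ps (t+1)))
          ((iterBind ν Ps t).bind P) μ
        rw [iterBind]
        exact h
      have h1 : tvDist ((iterBind ν Ps t).bind (Ps (t+1))) ((iterBind ν Ps t).bind P) ≤ ε :=
        tv_bind_close (hmeas (t+1)) hPm (hprob _) hPp hε0 (fun x => hclose _ x)
      have h2 : tvDist ((iterBind ν Ps t).bind P) μ
          ≤ (1 - α) * tvDist (iterBind ν Ps t) μ := by
        have h := tv_bind_contract (μ := iterBind ν Ps t) (ν := μ) hPm hPp
          (γ := 1 - α) (by linarith) hD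
        rwa [hinv] at h
      have h3 := ih
      have h4 := tv_nonneg (iterBind ν Ps t) μ
      have hα : (0:ℝ) < α := hα0
      calc tvDist (iterBind ν Ps (t+1)) μ
          ≤ ε + (1 - α) * tvDist (iterBind ν Ps t) μ := by linarith
        _ ≤ ε + (1 - α) * ((1 - α) ^ t * (1 - ε / α) + ε / α) := by nlinarith
        _ = (1 - α) ^ (t+1) * (1 - ε / α) + ε / α := by field_simp; ring

end ChainLemmas

section CovLemma
variable {Θ : Type*} [MeasurableSpace Θ] {Ω : Type*} [MeasurableSpace Ω]
open ProbabilityTheory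

lemma cov_bound
    (Pμ : Measure Ω) [IsProbabilityMeasure Pμ]
    (Phat : ℕ → Θ → Measure Θ) (hPhatmeas : ∀ t, Measurable (Phat t))
    (hPhat : ∀ t θ, IsProbabilityMeasure (Phat t θ))
    (X : ℕ → Ω → Θ) (hXmeas : ∀ t, Measurable (X t))
    (hjoint : ∀ j k : ℕ, j ≤ k → ∀ A B : Set Θ, MeasurableSet A → MeasurableSet B →
      Pμ {ω | X j ω ∈ A ∧ X k ω ∈ B}
        = ∫⁻ x in A, stepK Phat j (k - j) x B ∂(Measure.map (X j) Pμ))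
    (f : Θ → ℝ) (hf : Measurable f) (C : ℝ) (hC : ∀ θ, |f θ| ≤ C) (hC0 : 0 ≤ C)
    {β : ℝ} (hβ0 : 0 ≤ β) (hβ1 : β ≤ 1)
    (hD : ∀ t x y, tvDist (Phat t x) (Phat t y) ≤ β)
    (j k : ℕ) (hjk : j ≤ k) :
    |∫ ω, f (X j ω) * f (X k ω) ∂Pμ
      - (∫ ω, f (X j ω) ∂Pμ) * (∫ ω, f (X k ω) ∂Pμ)| ≤ 4 * C ^ 2 * β ^ (k - j) := by
  set m := k - j with hm
  set lj : Measure Θ := Measure.map (X j) Pμ with hlj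
  haveI : IsProbabilityMeasure lj := Measure.isProbabilityMeasure_map (hXmeas j).aemeasurable
  haveI hSP := stepK_prob Phat hPhatmeas hPhat j m
  set K : ProbabilityTheory.Kernel Θ Θ := ⟨stepK Phat j m, stepK_meas Phat hPhatmeas j m⟩
    with hK
  haveI : IsMarkovKernel K := ⟨fun x => hSP x⟩
  have hKapp : ∀ x, K x = stepK Phat j m x := fun x => rfl
  have hpair : Measurable (fun ω => (X j ω, X k ω)) := (hXmeas j).prodMk (hXmeas k)
  -- joint law
  have joint_eq : Measure.map (fun ω => (X j ω, X k ω)) Pμ = lj.compProd K := by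
    haveI : IsProbabilityMeasure (Measure.map (fun ω => (X j ω, X k ω)) Pμ) :=
      Measure.isProbabilityMeasure_map hpair.aemeasurable
    refine ext_of_generate_finite _ generateFrom_prod.symm isPiSystem_prod ?_ ?_
    · rintro - ⟨s, hs, t, ht, rfl⟩
      simp only [Set.mem_setOf_eq] at hs ht
      rw [Measure.map_apply hpair (hs.prod ht), Measure.compProd_apply_prod hs ht]
      have hset : (fun ω => (X j ω, X k ω)) ⁻¹' (s ×ˢ t) = {ω | X j ω ∈ s ∧ X k ω ∈ t} := by
        ext ω; simp [Set.mem_prod]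
      rw [hset, hjoint j k hjk s t hs ht]
      rfl
    · simp
  -- the function g
  set g : Θ → ℝ := fun x => ∫ y, f y ∂(K x) with hg
  have hgm : Measurable g := by
    have : StronglyMeasurable (Function.uncurry fun (_ : Θ) (y : Θ) => f y) :=
      (hf.comp measurable_snd).stronglyMeasurable
    exact (this.integral_kernel_prod_right (κ := K)).measurable
  have hgb : ∀ x, |g x| ≤ C := fun x => by
    haveI : IsProbabilityMeasure (K x) := hSP x
    calc |g x| ≤ ∫ y, |f y| ∂(K x) := by
          simpa [Real.norm_eq_abs] using norm_integral_le_integral_norm (μ := K x) (f := f)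
      _ ≤ ∫ _, C ∂(K x) := integral_mono (integrable_of_bdd hf.abs (C := C)
            (fun y => by rw [abs_abs]; exact hC y)) (integrable_const C) (fun y => hC y)
      _ = C := by simp
  have hgosc : ∀ x y, |g x - g y| ≤ 2 * C * β ^ m := fun x y => by
    haveI : IsProbabilityMeasure (K x) := hSP x
    haveI : IsProbabilityMeasure (K y) := hSP y
    have h1 := abs_integral_sub_le_tv (μ := K x) (ν := K y) hf hC
    have h2 := stepK_tv Phat hPhatmeas hPhat j hβ0 hβ1 hD m x y
    have h3 : tvDist (K x) (K y) = tvDist (stepK Phat j m x) (stepK Phat j m y) := rfl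
    nlinarith [abs_nonneg (g x - g y)]
  -- identities
  have hfprod_meas : Measurable (fun p : Θ × Θ => f p.1 * f p.2) :=
    (hf.comp measurable_fst).mul (hf.comp measurable_snd)
  have hfprod_int : Integrable (fun p : Θ × Θ => f p.1 * f p.2) (lj.compProd K) :=
    integrable_of_bdd hfprod_meas (C := C * C) (fun p => by
      rw [abs_mul]; exact mul_le_mul (hC _) (hC _) (abs_nonneg _) hC0)
  have E1 : ∫ ω, f (X j ω) * f (X k ω) ∂Pμ = ∫ x, f x * g x ∂lj := by
    have h0 : ∫ ω, f (X j ω) * f (X k ω) ∂Pμ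
        = ∫ p : Θ × Θ, f p.1 * f p.2 ∂(Measure.map (fun ω => (X j ω, X k ω)) Pμ) :=
      (integral_map hpair.aemeasurable hfprod_meas.aestronglyMeasurable).symm
    rw [h0, joint_eq, Measure.integral_compProd hfprod_int]
    congr 1
    ext x
    rw [hg]
    exact integral_const_mul (f x) f
  have E2 : ∫ ω, f (X k ω) ∂Pμ = ∫ x, g x ∂lj := by
    have h0 : ∫ ω, f (X k ω) ∂Pμ
        = ∫ p : Θ × Θ, f p.2 ∂(Measure.map (fun ω => (X j ω, X k ω)) Pμ) :=
      (integral_map hpair.aemeasurable (hf.comp measurable_snd).aestronglyMeasurable).symm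
    have hint2 : Integrable (fun p : Θ × Θ => f p.2) (lj.compProd K) :=
      integrable_of_bdd (hf.comp measurable_snd) (C := C) (fun p => hC _)
    rw [h0, joint_eq, Measure.integral_compProd hint2]
  have E3 : ∫ ω, f (X j ω) ∂Pμ = ∫ x, f x ∂lj :=
    (integral_map (hXmeas j).aemeasurable hf.aestronglyMeasurable).symm
  rw [E1, E2, E3]
  set Ig : ℝ := ∫ x, g x ∂lj with hIg
  have hgdev : ∀ x, |g x - Ig| ≤ 2 * C * β ^ m := fun x => by
    have h0 : g x - Ig = ∫ y, (g x - g y) ∂lj := by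
      rw [integral_sub (integrable_const (g x)) (integrable_of_bdd hgm hgb)]
      simp
      exact hIg
    rw [h0]
    calc |∫ y, (g x - g y) ∂lj| ≤ ∫ y, |g x - g y| ∂lj := by
          simpa [Real.norm_eq_abs] using
            norm_integral_le_integral_norm (μ := lj) (f := fun y => g x - g y)
      _ ≤ ∫ _, 2 * C * β ^ m ∂lj := integral_mono
          ((Integrable.sub (integrable_const (g x)) (integrable_of_bdd hgm hgb)).abs)
          (integrable_const _) (fun y => hgosc x y)
      _ = 2 * C * β ^ m := by simp
  have hsplit : ∫ x, f x * g x ∂lj - (∫ x, f x ∂lj) * Ig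
      = ∫ x, f x * (g x - Ig) ∂lj := by
    rw [show (fun x => f x * (g x - Ig)) = fun x => f x * g x - f x * Ig by ext x; ring]
    rw [integral_sub (integrable_of_bdd (g := fun x => f x * g x) (hf.mul hgm) (C := C * C) (fun x => by
        rw [abs_mul]; exact mul_le_mul (hC _) (hgb _) (abs_nonneg _) hC0))
      (integrable_of_bdd (g := fun x => f x * Ig) (hf.mul measurable_const) (C := C * |Ig|) (fun x => by
        rw [abs_mul]; exact mul_le_mul_of_nonneg_right (hC _) (abs_nonneg _)))]
    rw [integral_mul_const]
  rw [hsplit]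
  calc |∫ x, f x * (g x - Ig) ∂lj| ≤ ∫ x, |f x| * |g x - Ig| ∂lj := by
        simpa [Real.norm_eq_abs, abs_mul] using
          norm_integral_le_integral_norm (μ := lj) (f := fun x => f x * (g x - Ig))
    _ ≤ ∫ _, C * (2 * C * β ^ m) ∂lj := integral_mono
        (integrable_of_bdd (hf.abs.mul (hgm.sub measurable_const).abs)
          (C := C * (2 * C * β ^ m)) (fun x => by
            rw [abs_mul, abs_abs, abs_abs]
            exact mul_le_mul (hC _) (hgdev _) (abs_nonneg _) hC0))
        (integrable_const _) (fun x => mul_le_mul (hC _) (hgdev _) (abs_nonneg _) hC0)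
    _ = C * (2 * C * β ^ m) := by simp
    _ ≤ 4 * C ^ 2 * β ^ (k - j) := by rw [← hm]; nlinarith [pow_nonneg hβ0 m]

end CovLemma

lemma Srev (β : ℝ) : ∀ M : ℕ, ∑ j ∈ Finset.range M, β ^ (M - j)
    = β * ∑ i ∈ Finset.range M, β ^ i := by
  intro M
  induction M with
  | zero => simp
  | succ M ih =>
    rw [Finset.sum_range_succ' (fun j => β ^ (M + 1 - j)) M]
    have h1 : ∀ j, M + 1 - (j + 1) = M - j := fun j => by omega
    simp only [h1, Nat.sub_zero]
    rw [ih, Finset.sum_range_succ]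
    ring

lemma Qsum (β : ℝ) (hβ : β ≠ 1) (M : ℕ) :
    ∑ j ∈ Finset.range M, ∑ k ∈ Finset.range M, β ^ ((j - k) + (k - j))
    = M + 2 / (1 - β) ^ 2 * (β ^ (M + 1) - β + M * β * (1 - β)) := by
  induction M with
  | zero => simp
  | succ M ih =>
    have hb1 : β - 1 ≠ 0 := sub_ne_zero.2 hβ
    have hgeom : ∑ i ∈ Finset.range M, β ^ i = (β ^ M - 1) / (β - 1) := geom_sum_eq hβ M
    have hrow : ∀ j ∈ Finset.range M, β ^ ((j - M) + (M - j)) = β ^ (M - j) := by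
      intro j hj
      rw [Finset.mem_range] at hj
      congr 1
      omega
    have hS : ∑ j ∈ Finset.range M, β ^ ((j - M) + (M - j))
        = β * ((β ^ M - 1) / (β - 1)) := by
      rw [Finset.sum_congr rfl hrow, Srev, hgeom]
    have hScol : ∑ k ∈ Finset.range M, β ^ ((M - k) + (k - M))
        = β * ((β ^ M - 1) / (β - 1)) := by
      rw [← hS]
      refine Finset.sum_congr rfl fun k hk => ?_
      congr 1
      omega
    rw [Finset.sum_range_succ]
    have hinner : ∀ j, ∑ k ∈ Finset.range (M + 1), β ^ ((j - k) + (k - j))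
        = (∑ k ∈ Finset.range M, β ^ ((j - k) + (k - j))) + β ^ ((j - M) + (M - j)) :=
      fun j => Finset.sum_range_succ _ M
    simp only [hinner]
    rw [Finset.sum_add_distrib, ih, hS, hScol]
    simp only [Nat.sub_self, pow_zero]
    push_cast
    have h2 : ((1:ℝ) - β) ^ 2 ≠ 0 := pow_ne_zero _ (sub_ne_zero.2 (Ne.symm hβ))
    field_simp
    ring
theorem stmt8 {Θ Ω : Type*} [MeasurableSpace Θ] [MeasurableSpace Ω]
    (Pμ : Measure Ω) [IsProbabilityMeasure Pμ]
    (P : Θ → Measure Θ) (hPmeas : Measurable P)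
    (hP : ∀ θ, IsProbabilityMeasure (P θ))
    (α : ℝ) (hα0 : 0 < α) (hα1 : α < 1)
    (hDoeblin : ∀ θ ζ : Θ, tvDist (P θ) (P ζ) ≤ 1 - α)
    (μ : Measure Θ) [IsProbabilityMeasure μ] (hinv : μ.bind P = μ)
    (Phat : ℕ → Θ → Measure Θ) (hPhatmeas : ∀ t, Measurable (Phat t))
    (hPhat : ∀ t θ, IsProbabilityMeasure (Phat t θ))
    (ε : ℝ) (hε0 : 0 ≤ ε) (hε : ε < min (α / 2) ((1 - α) / 2))
    (hclose : ∀ t θ, tvDist (Phat t θ) (P θ) ≤ ε)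
    (hDoeblinHat : ∀ t θ ζ, tvDist (Phat t θ) (Phat t ζ) ≤ 1 - (α + 2 * ε))
    (ν : Measure Θ) [IsProbabilityMeasure ν]
    (X : ℕ → Ω → Θ) (hXmeas : ∀ t, Measurable (X t))
    -- the chain starts at `ν` and has marginals `ν P̂₁ ⋯ P̂_t`
    (hmarg : ∀ t : ℕ, Measure.map (X t) Pμ = iterBind ν Phat t)
    -- Markov property for the pair `(X j, X k)`
    (hjoint : ∀ j k : ℕ, j ≤ k → ∀ A B : Set Θ, MeasurableSet A → MeasurableSet B →
      Pμ {ω | X j ω ∈ A ∧ X k ω ∈ B}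
        = ∫⁻ x in A, stepK Phat j (k - j) x B ∂(Measure.map (X j) Pμ))
    (f : Θ → ℝ) (hf : Measurable f) (C : ℝ) (hC : ∀ θ, |f θ| ≤ C)
    (M : ℕ) (hM : 1 ≤ M) :
    ∫ ω, ((∫ θ, f θ ∂μ) - (1 / (M : ℝ)) * ∑ t ∈ Finset.range M, f (X t ω)) ^ 2 ∂Pμ
      ≤ 4 * C ^ 2 * ((1 - (1 - α) ^ M) / (M * α)
            - ε * (1 - (1 - α) ^ M) / (M * α ^ 2) + ε / α) ^ 2
        + 8 * C ^ 2 * (1 / (M : ℝ)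
            + 2 / (α + 2 * ε) ^ 2
              * (((1 - (α + 2 * ε)) ^ (M + 1) - (1 - (α + 2 * ε))) / (M : ℝ) ^ 2
                + ((1 - (α + 2 * ε)) - (1 - (α + 2 * ε)) ^ 2) / M)) := by
  classical
  have hεα : ε < α / 2 := lt_of_lt_of_le hε (min_le_left _ _)
  have hεα2 : ε < (1 - α) / 2 := lt_of_lt_of_le hε (min_le_right _ _)
  set β : ℝ := 1 - (α + 2 * ε) with hβdef
  have hβ0 : 0 ≤ β := by rw [hβdef]; linarith
  have hβ1 : β ≤ 1 := by rw [hβdef]; linarith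
  have hβne : β ≠ 1 := by rw [hβdef]; intro h; linarith [hα0]
  have h1β : 1 - β = α + 2 * ε := by rw [hβdef]; ring
  haveI : Nonempty Θ := nonempty_of_prob μ
  have hC0 : 0 ≤ C := (abs_nonneg _).trans (hC (Classical.arbitrary Θ))
  have hMpos : (0:ℝ) < (M:ℝ) := by exact_mod_cast Nat.lt_of_lt_of_le Nat.zero_lt_one hM
  have hMne : (M:ℝ) ≠ 0 := ne_of_gt hMpos
  have hαne : α ≠ 0 := ne_of_gt hα0
  haveI hltp : ∀ t, IsProbabilityMeasure (iterBind ν Phat t) :=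
    iterBind_prob Phat hPhatmeas hPhat ν
  have hD : ∀ t x y, tvDist (Phat t x) (Phat t y) ≤ β := by
    intro t x y; rw [hβdef]; exact hDoeblinHat t x y
  -- means
  set c : ℝ := ∫ θ, f θ ∂μ with hcdef
  set mt : ℕ → ℝ := fun t => ∫ ω, f (X t ω) ∂Pμ with hmtdef
  have hfX_int : ∀ t, Integrable (fun ω => f (X t ω)) Pμ := fun t =>
    integrable_of_bdd (hf.comp (hXmeas t)) (C := C) (fun ω => hC _)
  have hmtb : ∀ t, |mt t| ≤ C := by
    intro t
    calc |mt t| ≤ ∫ ω, |f (X t ω)| ∂Pμ := by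
          simpa [Real.norm_eq_abs] using
            norm_integral_le_integral_norm (μ := Pμ) (f := fun ω => f (X t ω))
      _ ≤ ∫ _, C ∂Pμ := integral_mono (hfX_int t).abs (integrable_const C) (fun ω => by
            exact hC _)
      _ = C := by simp
  -- per-step bias
  set e : ℕ → ℝ := fun t => (1 - α) ^ t * (1 - ε / α) + ε / α with hedef
  have hbias_t : ∀ t, |c - mt t| ≤ 2 * C * e t := by
    intro t
    have h1 : mt t = ∫ x, f x ∂(iterBind ν Phat t) := by
      rw [hmtdef]
      simp only
      rw [← hmarg t, integral_map (hXmeas t).aemeasurable hf.aestronglyMeasurable]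
    have h2 := abs_integral_sub_le_tv (μ := iterBind ν Phat t) (ν := μ) hf hC
    have h3 := marginal_tv Phat hPhatmeas hPhat P hPmeas hP μ hinv ν hα0 hα1 hε0
      hDoeblin hclose t
    have h4 : |c - mt t| = |∫ x, f x ∂(iterBind ν Phat t) - ∫ x, f x ∂μ| := by
      rw [h1, hcdef, abs_sub_comm]
    rw [h4]
    calc |∫ x, f x ∂(iterBind ν Phat t) - ∫ x, f x ∂μ|
        ≤ 2 * C * tvDist (iterBind ν Phat t) μ := h2
      _ ≤ 2 * C * e t := mul_le_mul_of_nonneg_left h3 (by linarith)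
  -- ergodic average
  set G : Ω → ℝ := fun ω => (1 / (M:ℝ)) * ∑ t ∈ Finset.range M, f (X t ω) with hGdef
  have hGm : Measurable G :=
    measurable_const.mul (Finset.measurable_sum _ (fun t _ => hf.comp (hXmeas t)))
  have hGb : ∀ ω, |G ω| ≤ C := by
    intro ω
    rw [hGdef]
    simp only
    rw [abs_mul]
    have h1 : |∑ t ∈ Finset.range M, f (X t ω)| ≤ (M:ℝ) * C := by
      calc |∑ t ∈ Finset.range M, f (X t ω)| ≤ ∑ t ∈ Finset.range M, |f (X t ω)| :=
            Finset.abs_sum_le_sum_abs _ _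
        _ ≤ ∑ _t ∈ Finset.range M, C := Finset.sum_le_sum (fun t _ => hC _)
        _ = (M:ℝ) * C := by rw [Finset.sum_const, Finset.card_range]; ring
    have h2 : |1 / (M:ℝ)| = 1 / (M:ℝ) := abs_of_pos (by positivity)
    rw [h2]
    calc 1 / (M:ℝ) * |∑ t ∈ Finset.range M, f (X t ω)| ≤ 1 / (M:ℝ) * ((M:ℝ) * C) :=
          mul_le_mul_of_nonneg_left h1 (by positivity)
      _ = C := by field_simp
  have hGint : Integrable G Pμ := integrable_of_bdd hGm hGb
  set m : ℝ := ∫ ω, G ω ∂Pμ with hmdef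
  have hmb : |m| ≤ C := by
    calc |m| ≤ ∫ ω, |G ω| ∂Pμ := by
          simpa [Real.norm_eq_abs] using norm_integral_le_integral_norm (μ := Pμ) (f := G)
      _ ≤ ∫ _, C ∂Pμ := integral_mono hGint.abs (integrable_const C) (fun ω => by
            exact hGb _)
      _ = C := by simp
  have hm_eq : m = (1 / (M:ℝ)) * ∑ t ∈ Finset.range M, mt t := by
    rw [hmdef, hGdef]
    simp only
    rw [integral_const_mul]
    congr 1
    exact integral_finset_sum _ (fun t _ => hfX_int t)
  -- decomposition
  have hGm2int : Integrable (fun ω => (G ω - m)^2) Pμ := by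
    refine integrable_of_bdd ((hGm.sub measurable_const).pow measurable_const)
      (C := (C + |m|)^2) (fun ω => ?_)
    rw [abs_pow]
    have h1 : |G ω - m| ≤ C + |m| := (abs_sub _ _).trans (add_le_add (hGb ω) le_rfl)
    exact pow_le_pow_left₀ (abs_nonneg _) h1 2
  have hdecomp : ∫ ω, (c - G ω)^2 ∂Pμ = (c - m)^2 + ∫ ω, (G ω - m)^2 ∂Pμ := by
    have hexp : (fun ω => (c - G ω)^2)
        = fun ω => ((c - m)^2 + (2*(c-m))*(m - G ω)) + (G ω - m)^2 := by
      ext ω; ring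
    rw [hexp]
    have hint3 : Integrable (fun ω => m - G ω) Pμ := by
      exact (integrable_const m).sub hGint
    have hint2 : Integrable (fun ω => (2*(c-m))*(m - G ω)) Pμ := by
      exact hint3.const_mul _
    have hint1 : Integrable (fun ω => (c - m)^2 + (2*(c-m))*(m - G ω)) Pμ := by
      exact (integrable_const _).add hint2
    rw [integral_add hint1 hGm2int]
    congr 1
    rw [integral_add (integrable_const _) hint2]
    rw [integral_const]
    rw [integral_const_mul, integral_sub (integrable_const m) hGint, integral_const]
    simp [← hmdef]
  -- bias term
  have hbias : |c - m| ≤ 2 * C * ((1 / (M:ℝ)) * ∑ t ∈ Finset.range M, e t) := by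
    have h1 : c - m = (1 / (M:ℝ)) * ∑ t ∈ Finset.range M, (c - mt t) := by
      rw [hm_eq, Finset.sum_sub_distrib, Finset.sum_const, Finset.card_range]
      field_simp
      ring
    rw [h1, abs_mul, abs_of_pos (show (0:ℝ) < 1 / (M:ℝ) by positivity)]
    calc 1 / (M:ℝ) * |∑ t ∈ Finset.range M, (c - mt t)|
        ≤ 1 / (M:ℝ) * ∑ t ∈ Finset.range M, (2 * C * e t) := by
          refine mul_le_mul_of_nonneg_left ?_ (by positivity)
          exact (Finset.abs_sum_le_sum_abs _ _).trans
            (Finset.sum_le_sum (fun t _ => hbias_t t))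
      _ = 2 * C * ((1 / (M:ℝ)) * ∑ t ∈ Finset.range M, e t) := by
          rw [← Finset.mul_sum]; ring
  have hBeq : (1 / (M:ℝ)) * ∑ t ∈ Finset.range M, e t
      = (1 - (1 - α) ^ M) / (M * α) - ε * (1 - (1 - α) ^ M) / (M * α ^ 2) + ε / α := by
    have hgeom : ∑ t ∈ Finset.range M, (1 - α) ^ t = ((1 - α) ^ M - 1) / ((1 - α) - 1) :=
      geom_sum_eq (by intro h; exact hαne (by linarith)) M
    have hsum : ∑ t ∈ Finset.range M, e t
        = (∑ t ∈ Finset.range M, (1 - α) ^ t) * (1 - ε / α) + (M:ℝ) * (ε / α) := by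
      rw [hedef]
      rw [Finset.sum_add_distrib, Finset.sum_const, Finset.card_range, ← Finset.sum_mul]
      simp
    rw [hsum, hgeom]
    field_simp
    have hαα : α * α⁻¹ = 1 := mul_inv_cancel₀ hαne
    linear_combination (-ε + ε * (1 - α) ^ M + α - α * (1 - α) ^ M) * hαα
  have hterm1 : (c - m)^2 ≤ 4 * C ^ 2 * ((1 - (1 - α) ^ M) / (M * α)
      - ε * (1 - (1 - α) ^ M) / (M * α ^ 2) + ε / α) ^ 2 := by
    rw [hBeq] at hbias
    set B : ℝ := (1 - (1 - α) ^ M) / (M * α)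
      - ε * (1 - (1 - α) ^ M) / (M * α ^ 2) + ε / α with hBdef
    have h1 := abs_le.1 hbias
    have h2 : (c - m)^2 ≤ (2 * C * B)^2 := sq_le_sq' (by linarith [h1.1]) h1.2
    calc (c - m)^2 ≤ (2 * C * B)^2 := h2
      _ = 4 * C^2 * B^2 := by ring
  -- covariance terms
  have hprod_int : ∀ j k : ℕ, Integrable (fun ω => f (X j ω) * f (X k ω)) Pμ := by
    intro j k
    refine integrable_of_bdd ((hf.comp (hXmeas j)).mul (hf.comp (hXmeas k)))
      (C := C * C) (fun ω => ?_)
    rw [abs_mul]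
    exact mul_le_mul (hC _) (hC _) (abs_nonneg _) hC0
  have hh_int : ∀ j k : ℕ,
      Integrable (fun ω => (f (X j ω) - mt j) * (f (X k ω) - mt k)) Pμ := by
    intro j k
    refine integrable_of_bdd
      (((hf.comp (hXmeas j)).sub measurable_const).mul
        ((hf.comp (hXmeas k)).sub measurable_const))
      (C := (2*C) * (2*C)) (fun ω => ?_)
    rw [abs_mul]
    refine mul_le_mul ?_ ?_ (abs_nonneg _) (by linarith)
    · exact (abs_sub _ _).trans (by have := hmtb j; have := hC (X j ω); linarith)
    · exact (abs_sub _ _).trans (by have := hmtb k; have := hC (X k ω); linarith)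
  have hcov_eq : ∀ j k : ℕ, ∫ ω, (f (X j ω) - mt j) * (f (X k ω) - mt k) ∂Pμ
      = ∫ ω, f (X j ω) * f (X k ω) ∂Pμ - mt j * mt k := by
    intro j k
    have hexp : (fun ω => (f (X j ω) - mt j) * (f (X k ω) - mt k))
        = fun ω => (f (X j ω) * f (X k ω) - mt j * f (X k ω))
            - (mt k * f (X j ω) - mt j * mt k) := by
      ext ω; ring
    have i1 : Integrable (fun ω => f (X j ω) * f (X k ω)) Pμ := hprod_int j k
    have i2 : Integrable (fun ω => mt j * f (X k ω)) Pμ := by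
      exact (hfX_int k).const_mul _
    have i3 : Integrable (fun ω => mt k * f (X j ω)) Pμ := by
      exact (hfX_int j).const_mul _
    have i4 : Integrable (fun ω => f (X j ω) * f (X k ω) - mt j * f (X k ω)) Pμ := by
      exact i1.sub i2
    have i5 : Integrable (fun ω => mt k * f (X j ω) - mt j * mt k) Pμ := by
      exact i3.sub (integrable_const _)
    rw [hexp, integral_sub i4 i5, integral_sub i1 i2, integral_sub i3 (integrable_const _),
      integral_const_mul, integral_const_mul, integral_const]
    simp only [measure_univ, probReal_univ, ENNReal.toReal_one, smul_eq_mul, one_mul, hmtdef]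
    ring
  have hcov_bd : ∀ j k : ℕ, ∫ ω, (f (X j ω) - mt j) * (f (X k ω) - mt k) ∂Pμ
      ≤ 8 * C^2 * β ^ ((j - k) + (k - j)) := by
    have hmain : ∀ j k : ℕ, j ≤ k →
        ∫ ω, (f (X j ω) - mt j) * (f (X k ω) - mt k) ∂Pμ
          ≤ 8 * C^2 * β ^ ((j - k) + (k - j)) := by
      intro j k hjk
      have h0 := cov_bound Pμ Phat hPhatmeas hPhat X hXmeas hjoint f hf C hC hC0
        hβ0 hβ1 hD j k hjk
      rw [hcov_eq j k]
      have he : (j - k) + (k - j) = k - j := by omega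
      rw [he]
      have h1 := (abs_le.1 h0).2
      have h2 : (0:ℝ) ≤ 4 * C^2 * β ^ (k - j) := by positivity
      calc ∫ ω, f (X j ω) * f (X k ω) ∂Pμ - mt j * mt k
          ≤ 4 * C^2 * β ^ (k - j) := by
            simp only [hmtdef]
            simpa using h1
        _ ≤ 8 * C^2 * β ^ (k - j) := by nlinarith [pow_nonneg hβ0 (k - j)]
    intro j k
    rcases le_total j k with h | h
    · exact hmain j k h
    · have hsym : ∫ ω, (f (X j ω) - mt j) * (f (X k ω) - mt k) ∂Pμ
          = ∫ ω, (f (X k ω) - mt k) * (f (X j ω) - mt j) ∂Pμ := by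
        congr 1; ext ω; ring
      have he : (j - k) + (k - j) = (k - j) + (j - k) := by omega
      rw [hsym, he]
      exact hmain k j h
  -- variance term
  have hvar_eq : ∫ ω, (G ω - m)^2 ∂Pμ
      = (1/(M:ℝ))^2 * ∑ j ∈ Finset.range M, ∑ k ∈ Finset.range M,
          ∫ ω, (f (X j ω) - mt j) * (f (X k ω) - mt k) ∂Pμ := by
    have hGm' : ∀ ω, G ω - m
        = (1/(M:ℝ)) * ∑ t ∈ Finset.range M, (f (X t ω) - mt t) := by
      intro ω
      rw [hm_eq, hGdef]
      simp only
      rw [Finset.sum_sub_distrib]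
      ring
    have hsq : (fun ω => (G ω - m)^2)
        = fun ω => (1/(M:ℝ))^2 * ∑ j ∈ Finset.range M, ∑ k ∈ Finset.range M,
            (f (X j ω) - mt j) * (f (X k ω) - mt k) := by
      ext ω
      rw [hGm' ω, mul_pow]
      congr 1
      rw [sq, Finset.sum_mul_sum]
    rw [hsq, integral_const_mul]
    congr 1
    rw [integral_finset_sum _ (fun j _ =>
      integrable_finset_sum _ (fun k _ => hh_int j k))]
    exact Finset.sum_congr rfl (fun j _ => integral_finset_sum _ (fun k _ => hh_int j k))
  have hvar_bd : ∫ ω, (G ω - m)^2 ∂Pμ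
      ≤ 8 * C ^ 2 * (1 / (M : ℝ)
          + 2 / (α + 2 * ε) ^ 2 * ((β ^ (M + 1) - β) / (M : ℝ) ^ 2 + (β - β ^ 2) / M)) := by
    rw [hvar_eq]
    have hsum_le : ∑ j ∈ Finset.range M, ∑ k ∈ Finset.range M,
        ∫ ω, (f (X j ω) - mt j) * (f (X k ω) - mt k) ∂Pμ
        ≤ ∑ j ∈ Finset.range M, ∑ k ∈ Finset.range M, 8 * C^2 * β ^ ((j - k) + (k - j)) :=
      Finset.sum_le_sum (fun j _ => Finset.sum_le_sum (fun k _ => hcov_bd j k))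
    have hQ : ∑ j ∈ Finset.range M, ∑ k ∈ Finset.range M, 8 * C^2 * β ^ ((j - k) + (k - j))
        = 8 * C^2 * ((M:ℝ) + 2 / (1 - β) ^ 2 * (β ^ (M + 1) - β + M * β * (1 - β))) := by
      simp_rw [← Finset.mul_sum]
      rw [Qsum β hβne M]
    have hfin : (1/(M:ℝ))^2 *
        (8 * C^2 * ((M:ℝ) + 2 / (1 - β) ^ 2 * (β ^ (M + 1) - β + M * β * (1 - β))))
        = 8 * C ^ 2 * (1 / (M : ℝ)
          + 2 / (α + 2 * ε) ^ 2 * ((β ^ (M + 1) - β) / (M : ℝ) ^ 2 + (β - β ^ 2) / M)) := by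
      rw [← h1β]
      have h1βne : 1 - β ≠ 0 := by rw [h1β]; positivity
      field_simp
    calc (1/(M:ℝ))^2 * ∑ j ∈ Finset.range M, ∑ k ∈ Finset.range M,
          ∫ ω, (f (X j ω) - mt j) * (f (X k ω) - mt k) ∂Pμ
        ≤ (1/(M:ℝ))^2 * ∑ j ∈ Finset.range M, ∑ k ∈ Finset.range M,
            8 * C^2 * β ^ ((j - k) + (k - j)) :=
          mul_le_mul_of_nonneg_left (hsum_le.trans_eq rfl) (by positivity)
      _ = 8 * C ^ 2 * (1 / (M : ℝ)
          + 2 / (α + 2 * ε) ^ 2 * ((β ^ (M + 1) - β) / (M : ℝ) ^ 2 + (β - β ^ 2) / M)) := by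
          rw [hQ]; exact hfin
  -- conclude
  calc ∫ ω, (c - G ω)^2 ∂Pμ = (c - m)^2 + ∫ ω, (G ω - m)^2 ∂Pμ := hdecomp
    _ ≤ 4 * C ^ 2 * ((1 - (1 - α) ^ M) / (M * α)
          - ε * (1 - (1 - α) ^ M) / (M * α ^ 2) + ε / α) ^ 2
        + 8 * C ^ 2 * (1 / (M : ℝ)
          + 2 / (α + 2 * ε) ^ 2 * ((β ^ (M + 1) - β) / (M : ℝ) ^ 2 + (β - β ^ 2) / M)) :=
        add_le_add hterm1 hvar_bd
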